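/- Let V : H^d → H be a row partial isometry and T ⊇ V a row contractive extension. For every z in the open unit ball of ℂ^d, the operator (I - Tz*)^{-1} exists (since ‖Tz*‖ < 1) and maps H ⊖ ran(V) bijectively onto H ⊖ ran((V - z) V*V), where z is viewed as the row operator z : H^d → H, z(h₁,...,h_d) = z₁h₁ + ... + z_d h_d. -/

import Mathlib

open ContinuousLinearMap

set_option synthInstance.maxHeartbeats 1000000
set_option maxHeartbeats 1000000
set_option linter.unusedSectionVars false

noncomputable section

instance piLpComplete {d : ℕ} {H : Type*} [NormedAddCommGroup H]
    [InnerProductSpace ℂ H] [CompleteSpace H] :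
    CompleteSpace (PiLp 2 fun _ : Fin d => H) :=
  inferInstance

/-- The row operator `z : H^d → H`, `(h₁,...,h_d) ↦ Σ zⱼ hⱼ`, for a scalar row `z ∈ ℂ^d`. -/
def rowOp {d : ℕ} {H : Type*} [NormedAddCommGroup H] [InnerProductSpace ℂ H]
    (z : EuclideanSpace ℂ (Fin d)) : PiLp 2 (fun _ : Fin d => H) →L[ℂ] H :=
  ∑ j, z j • ((ContinuousLinearMap.proj j : (∀ _ : Fin d, H) →L[ℂ] H).comp
    (PiLp.continuousLinearEquiv 2 ℂ (fun _ : Fin d => H)).toContinuousLinearMap)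

/-- The column operator `z* : H → H^d`, `h ↦ (z̄₁ h, ..., z̄_d h)`; the adjoint of `rowOp z`. -/
def colOp {d : ℕ} {H : Type*} [NormedAddCommGroup H] [InnerProductSpace ℂ H]
    (z : EuclideanSpace ℂ (Fin d)) : H →L[ℂ] PiLp 2 (fun _ : Fin d => H) :=
  ((PiLp.continuousLinearEquiv 2 ℂ (fun _ : Fin d => H)).symm.toContinuousLinearMap).comp
    (ContinuousLinearMap.pi fun j => (starRingEnd ℂ (z j)) • ContinuousLinearMap.id ℂ H)

/-- Ampliation `A ⊗ I_d` of an operator `A : H → J` acting componentwise on columns. -/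
def liftD {d : ℕ} {H J : Type*} [NormedAddCommGroup H] [InnerProductSpace ℂ H]
    [NormedAddCommGroup J] [InnerProductSpace ℂ J] (A : H →L[ℂ] J) :
    PiLp 2 (fun _ : Fin d => H) →L[ℂ] PiLp 2 (fun _ : Fin d => J) :=
  ((PiLp.continuousLinearEquiv 2 ℂ (fun _ : Fin d => J)).symm.toContinuousLinearMap).comp <|
    (ContinuousLinearMap.pi fun j =>
      A.comp ((ContinuousLinearMap.proj j : (∀ _ : Fin d, H) →L[ℂ] H))).comp
    (PiLp.continuousLinearEquiv 2 ℂ (fun _ : Fin d => H)).toContinuousLinearMap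

section aux

variable {d : ℕ} {H : Type*} [NormedAddCommGroup H] [InnerProductSpace ℂ H] [CompleteSpace H]

local notation "⟪" x ", " y "⟫" => @inner ℂ _ _ x y

lemma colOp_apply (z : EuclideanSpace ℂ (Fin d)) (h : H) (j : Fin d) :
    colOp z h j = (starRingEnd ℂ) (z j) • h := rfl

lemma rowOp_apply (z : EuclideanSpace ℂ (Fin d)) (x : PiLp 2 fun _ : Fin d => H) :
    rowOp z x = ∑ j, z j • x j := by
  simp [rowOp]

lemma adjoint_rowOp (z : EuclideanSpace ℂ (Fin d)) :
    adjoint (rowOp z : PiLp 2 (fun _ : Fin d => H) →L[ℂ] H) = colOp z := by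
  symm
  rw [eq_adjoint_iff]
  intro x y
  simp [PiLp.inner_apply, colOp_apply, rowOp_apply, inner_smul_left, inner_sum,
    inner_smul_right]

lemma norm_colOp_le (z : EuclideanSpace ℂ (Fin d)) :
    ‖(colOp z : H →L[ℂ] PiLp 2 fun _ : Fin d => H)‖ ≤ ‖z‖ := by
  refine opNorm_le_bound _ (norm_nonneg z) fun h => ?_
  have h1 : ‖colOp z h‖ ^ 2 = (‖z‖ * ‖h‖) ^ 2 := by
    rw [PiLp.norm_sq_eq_of_L2, EuclideanSpace.norm_eq]
    rw [mul_pow, Real.sq_sqrt (by positivity)]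
    rw [Finset.sum_mul]
    refine Finset.sum_congr rfl fun j _ => ?_
    rw [colOp_apply, norm_smul]
    simp [mul_pow]
  have h2 : (0:ℝ) ≤ ‖z‖ * ‖h‖ := by positivity
  nlinarith [norm_nonneg (colOp z h)]

lemma mem_orth_range_iff {E : Type*} [NormedAddCommGroup E] [InnerProductSpace ℂ E]
    [CompleteSpace E] (B : E →L[ℂ] H) (x : H) :
    x ∈ ((LinearMap.range (B : E →ₗ[ℂ] H))ᗮ : Submodule ℂ H) ↔ adjoint B x = 0 := by
  constructor
  · intro hx
    have hu : ⟪(B : E →L[ℂ] H) (adjoint B x), x⟫ = 0 :=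
      (Submodule.mem_orthogonal _ _).mp hx _ ⟨adjoint B x, rfl⟩
    have h0 : ⟪adjoint B x, adjoint B x⟫ = 0 := by
      rw [adjoint_inner_left, ← inner_conj_symm, hu, map_zero]
    exact inner_self_eq_zero.mp h0
  · intro hx
    rw [Submodule.mem_orthogonal]
    rintro u ⟨y, rfl⟩
    have : ⟪(B : E →L[ℂ] H) y, x⟫ = ⟪y, adjoint B x⟫ := (adjoint_inner_right _ _ _).symm
    change ⟪(B : E →L[ℂ] H) y, x⟫ = 0
    rw [this, hx, inner_zero_right]

lemma contraction_fix {E : Type*} [NormedAddCommGroup E] [InnerProductSpace ℂ E]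
    [CompleteSpace E] (T : E →L[ℂ] H) (hT : ‖T‖ ≤ 1) (y : E) (hy : ‖T y‖ = ‖y‖) :
    adjoint T (T y) = y := by
  have hre : RCLike.re ⟪adjoint T (T y), y⟫ = ‖T y‖ ^ 2 := by
    rw [adjoint_inner_left]
    exact inner_self_eq_norm_sq _
  have hn : ‖adjoint T (T y)‖ ≤ ‖T y‖ := by
    calc ‖adjoint T (T y)‖ ≤ ‖adjoint T‖ * ‖T y‖ := le_opNorm _ _
      _ ≤ 1 * ‖T y‖ := by
          have : ‖adjoint T‖ = ‖T‖ := LinearIsometryEquiv.norm_map adjoint T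
          rw [this]; exact mul_le_mul_of_nonneg_right hT (norm_nonneg _)
      _ = ‖T y‖ := one_mul _
  have hsq : ‖adjoint T (T y) - y‖ ^ 2 ≤ 0 := by
    rw [norm_sub_sq (𝕜 := ℂ), hre]
    nlinarith [norm_nonneg (T y), norm_nonneg (adjoint T (T y))]
  have := sq_nonneg ‖adjoint T (T y) - y‖
  have hz : ‖adjoint T (T y) - y‖ = 0 := by nlinarith
  rw [norm_eq_zero] at hz
  exact sub_eq_zero.mp hz

lemma norm_eq_of_sq_eq {a b : ℝ} (ha : 0 ≤ a) (hb : 0 ≤ b) (h : a ^ 2 = b ^ 2) : a = b := by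
  rw [← Real.sqrt_sq ha, h, Real.sqrt_sq hb]

end aux

/-- Let `V : H^d → H` be a row partial isometry and `T ⊇ V` a row contractive
extension.  For every `z` in the open unit ball of `ℂ^d`, the operator `1 - Tz*` is invertible
and its inverse maps `H ⊖ ran V` bijectively onto `H ⊖ Ran_z(V)`, where
`Ran_z(V) = ran ((V - z) V*V)`. -/
theorem stmt_4 {d : ℕ} {H : Type*} [NormedAddCommGroup H] [InnerProductSpace ℂ H]
    [CompleteSpace H]
    (V T : PiLp 2 (fun _ : Fin d => H) →L[ℂ] H)
    (hV : IsIdempotentElem (V ∘L (adjoint V))) (hT : ‖T‖ ≤ 1)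
    (hext : T ∘L ((adjoint V) ∘L V) = V)
    (z : EuclideanSpace ℂ (Fin d)) (hz : ‖z‖ < 1) :
    ∃ S : H →L[ℂ] H,
      (1 - T ∘L colOp z) ∘L S = 1 ∧ S ∘L (1 - T ∘L colOp z) = 1 ∧
      Set.BijOn S ((LinearMap.range (V : PiLp 2 (fun _ : Fin d => H) →ₗ[ℂ] H))ᗮ : Set H)
        (((LinearMap.range ((V - rowOp z) ∘L ((adjoint V) ∘L V) : PiLp 2 (fun _ : Fin d => H) →ₗ[ℂ] H))ᗮ : Set H)) := by
  classical
  set Q : PiLp 2 (fun _ : Fin d => H) →L[ℂ] PiLp 2 (fun _ : Fin d => H) :=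
    (adjoint V) ∘L V with hQdef
  set A : H →L[ℂ] H := T ∘L colOp z with hAdef
  set W : PiLp 2 (fun _ : Fin d => H) →L[ℂ] H := (V - rowOp z) ∘L Q with hWdef
  have hQsa : adjoint Q = Q := by
    rw [hQdef, adjoint_comp, adjoint_adjoint]
  -- pointwise idempotence of P = V V*
  have hPx : ∀ x : H, V (adjoint V (V (adjoint V x))) = V (adjoint V x) := by
    intro x
    have := ContinuousLinearMap.ext_iff.mp hV x
    simpa [ContinuousLinearMap.mul_def] using this
  -- V Q = V
  have h1 : V ∘L Q = V := by
    have hadjB : adjoint (V ∘L Q - V) = Q ∘L adjoint V - adjoint V := by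
      rw [map_sub, adjoint_comp, hQsa]
    have hB0 : ∀ x : H, (V ∘L Q - V) ((adjoint (V ∘L Q - V)) x) = 0 := by
      intro x
      rw [hadjB]
      simp only [sub_apply, comp_apply, map_sub, hQdef]
      simp only [hPx]
      abel
    have hadjB0 : adjoint (V ∘L Q - V) = 0 := by
      refine ContinuousLinearMap.ext fun x => ?_
      have h0 : inner ℂ (adjoint (V ∘L Q - V) x) (adjoint (V ∘L Q - V) x) = 0 := by
        rw [adjoint_inner_left, hB0 x, inner_zero_right]
      simpa using inner_self_eq_zero.mp h0
    have hB : V ∘L Q - V = 0 := by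
      have := congrArg (adjoint (𝕜 := ℂ)) hadjB0
      rwa [adjoint_adjoint, map_zero] at this
    exact sub_eq_zero.mp hB
  have h1x : ∀ x, V (adjoint V (V x)) = V x := by
    intro x
    have := ContinuousLinearMap.ext_iff.mp h1 x
    simpa [hQdef] using this
  have hQVop : Q ∘L adjoint V = adjoint V := by
    have := congrArg (adjoint (𝕜 := ℂ)) h1
    rwa [adjoint_comp, hQsa] at this
  have hext_x : ∀ x, T (adjoint V (V x)) = V x := by
    intro x
    have := ContinuousLinearMap.ext_iff.mp hext x
    simpa [hQdef] using this
  have hQT : Q ∘L adjoint T = adjoint V := by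
    have := congrArg (adjoint (𝕜 := ℂ)) hext
    rwa [adjoint_comp, hQsa] at this
  -- T*T Q = Q
  have hTTQx : ∀ x, adjoint T (T (Q x)) = Q x := by
    intro x
    refine contraction_fix T hT (Q x) ?_
    have hTQ : T (Q x) = V x := by
      simpa [hQdef] using hext_x x
    rw [hTQ]
    refine norm_eq_of_sq_eq (norm_nonneg _) (norm_nonneg _) ?_
    have e1 : inner ℂ (Q x) (Q x) = inner ℂ (V x) (V x) := by
      have : inner ℂ (Q x) (Q x) = inner ℂ (V x) (V (Q x)) := by
        simp only [hQdef, comp_apply]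
        exact adjoint_inner_left V _ _
      rw [this]
      congr 1
      simpa [hQdef] using h1x x
    have h2 := congrArg RCLike.re e1
    rw [inner_self_eq_norm_sq, inner_self_eq_norm_sq] at h2
    exact h2.symm
  have hTTQ : (adjoint T ∘L T) ∘L Q = Q := by
    refine ContinuousLinearMap.ext fun x => ?_
    simpa using hTTQx x
  have hQTT : Q ∘L (adjoint T ∘L T) = Q := by
    have := congrArg (adjoint (𝕜 := ℂ)) hTTQ
    rwa [adjoint_comp, hQsa, adjoint_comp, adjoint_adjoint] at this
  have keyOp : adjoint V ∘L T = Q := by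
    rw [← hQT, comp_assoc, hQTT]
  -- the crucial identity  V* (1 - A) = W*
  have hE : adjoint V ∘L (1 - A) = adjoint W := by
    rw [hWdef, adjoint_comp, hQsa, map_sub, adjoint_rowOp, hAdef]
    rw [comp_sub, comp_sub, hQVop, ← comp_assoc, keyOp]
    rw [ContinuousLinearMap.one_def, ContinuousLinearMap.comp_id]
  -- invertibility
  have hAn : ‖A‖ < 1 := by
    refine lt_of_le_of_lt (le_trans (opNorm_comp_le _ _) ?_) hz
    calc ‖T‖ * ‖colOp z‖ ≤ 1 * ‖z‖ :=
          mul_le_mul hT (norm_colOp_le z) (ContinuousLinearMap.opNorm_nonneg _) zero_le_one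
      _ = ‖z‖ := one_mul _
  let u : (H →L[ℂ] H)ˣ := Units.oneSub A hAn
  set S : H →L[ℂ] H := ((u⁻¹ : (H →L[ℂ] H)ˣ) : H →L[ℂ] H) with hSdef
  have hSl : (1 - A) ∘L S = 1 := u.mul_inv
  have hSr : S ∘L (1 - A) = 1 := u.inv_mul
  have hfixl : ∀ x, (1 - A) (S x) = x := by
    intro x
    have := ContinuousLinearMap.ext_iff.mp hSl x
    simpa using this
  have hfixr : ∀ x, S ((1 - A) x) = x := by
    intro x
    have := ContinuousLinearMap.ext_iff.mp hSr x
    simpa using this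
  refine ⟨S, hSl, hSr, ?_, ?_, ?_⟩
  · -- MapsTo
    intro x hx
    have hx' : adjoint V x = 0 := (mem_orth_range_iff V x).mp hx
    refine (mem_orth_range_iff W (S x)).mpr ?_
    have h3 : adjoint W (S x) = adjoint V ((1 - A) (S x)) := by
      rw [← hE]; rfl
    rw [h3, hfixl, hx']
  · -- InjOn
    intro a _ b _ hab
    have : (1 - A) (S a) = (1 - A) (S b) := by rw [hab]
    rwa [hfixl, hfixl] at this
  · -- SurjOn
    intro y hy
    refine ⟨(1 - A) y, ?_, hfixr y⟩
    refine (mem_orth_range_iff V ((1 - A) y)).mpr ?_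
    have h3 : adjoint V ((1 - A) y) = adjoint W y := by
      rw [← hE]; rfl
    rw [h3]
    exact (mem_orth_range_iff W y).mp hy


end
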